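/- In a simplified market in which every item is legal to at least two players, every edge of the legality graph G(O) of a legal allocation O lies on a directed cycle of G(O). -/

import Mathlib

open Finset

/-- A legal allocation of a simplified market: a partition of the items into bundles
`O i` with `|O i| = k i` and `O i ⊆ 𝓛 i` for every player `i`. -/
def LegalAlloc {X I : Type*} (k : I → ℕ) (L : I → Finset X) (O : I → Finset X) : Prop :=
  (∀ i, (O i).card = k i) ∧ (∀ x : X, ∃! i, x ∈ O i) ∧ (∀ i, O i ⊆ L i)

/-- The edge relation of the legality graph `G(O)`: `x → y` iff some player `i`
has `x ∈ O i` and `y ∈ 𝓛 i ∖ O i`. -/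
def LegalityEdge {X I : Type*} (L : I → Finset X) (O : I → Finset X) (x y : X) : Prop :=
  ∃ i, x ∈ O i ∧ y ∈ L i ∧ y ∉ O i

set_option linter.unusedVariables false

lemma exists_nodup_chain {α : Type*} [DecidableEq α] (r : α → α → Prop) {a b : α}
    (h : Relation.ReflTransGen r a b) :
    ∃ l : List α, l.Chain' r ∧ l.head? = some a ∧ l.getLast? = some b ∧ l.Nodup ∧
      ∀ c ∈ l, c = a ∨ ∃ d, r d c := by
  induction h with
  | refl => exact ⟨[a], List.isChain_singleton a, rfl, rfl, by simp, by simp⟩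
  | @tail b c hab hbc ih =>
    obtain ⟨l, hchain, hhead, hlast, hnodup, hmem⟩ := ih
    have hlne : l ≠ [] := by rintro rfl; simp at hhead
    by_cases hc : c ∈ l
    · -- truncate l at the first occurrence of c
      have hdne : l.dropWhile (· ≠ c) ≠ [] := by
        intro hd
        have htw : l.takeWhile (· ≠ c) = l := by
          have := List.takeWhile_append_dropWhile (p := (· ≠ c)) (l := l)
          rwa [hd, List.append_nil] at this
        have := List.mem_takeWhile_imp (htw ▸ hc)
        simp at this
      have hhd : (l.dropWhile (· ≠ c)).head hdne = c := by
        have := List.head_dropWhile_not (· ≠ c) hdne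
        simpa using this
      have h1 : l.dropWhile (· ≠ c) = c :: (l.dropWhile (· ≠ c)).tail := by
        have h2 := (List.cons_head_tail hdne).symm
        rwa [hhd] at h2
      have hpre : l.takeWhile (· ≠ c) ++ [c] <+: l := by
        refine ⟨(l.dropWhile (· ≠ c)).tail, ?_⟩
        rw [List.append_assoc, List.singleton_append, ← h1,
          List.takeWhile_append_dropWhile]
      have hcnt : c ∉ l.takeWhile (· ≠ c) := by
        intro hmem'
        have := List.mem_takeWhile_imp hmem'
        simp at this
      refine ⟨l.takeWhile (· ≠ c) ++ [c], hchain.prefix hpre, ?_, List.getLast?_concat,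
        ?_, ?_⟩
      · -- head
        cases l with
        | nil => exact absurd rfl hlne
        | cons a0 t =>
          simp only [List.head?_cons, Option.some_inj] at hhead
          subst hhead
          by_cases hac : a0 = c
          · simp [List.takeWhile_cons, hac]
          · simp [List.takeWhile_cons, hac]
      · exact List.Nodup.append ((List.takeWhile_sublist _).nodup hnodup) (by simp)
          (by simpa using hcnt)
      · intro d hd
        exact hmem d (hpre.sublist.subset hd)
    · refine ⟨l ++ [c], ?_, ?_, List.getLast?_concat, ?_, ?_⟩
      · refine List.isChain_append.mpr ?_
        refine ⟨hchain, List.isChain_singleton c, ?_⟩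
        intro p hp q hq
        rw [hlast] at hp
        obtain rfl : b = p := by simpa using hp
        obtain rfl : c = q := by simpa using hq
        exact hbc
      · cases l with
        | nil => exact absurd rfl hlne
        | cons a0 t => simpa using hhead
      · exact List.Nodup.append hnodup (by simp) (by simpa using hc)
      · intro d hd
        rcases List.mem_append.mp hd with h | h
        · exact hmem d h
        · obtain rfl : d = c := List.mem_singleton.mp h
          exact Or.inr ⟨b, hbc⟩


private lemma every_edge_key
    {X I : Type*} [Fintype X] [DecidableEq X] [Fintype I] [DecidableEq I]
    (k : I → ℕ)
    (L : I → Finset X)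
    (htight : ∀ i, ∀ x ∈ L i, ∃ O : I → Finset X, LegalAlloc k L O ∧ x ∈ O i)
    (h2 : ∀ x : X, 2 ≤ (Finset.univ.filter (fun i => x ∈ L i)).card)
    (O : I → Finset X) (hO : LegalAlloc k L O)
    (x y : X)
    (i : I) (hxOi : x ∈ O i) (hyLi : y ∈ L i) (hyOi : y ∉ O i)
    (r : X → X → Prop)
    (hr : r = fun a b => LegalityEdge L O a b ∧ a ≠ x ∧ b ≠ x)
    (hRne : ∀ v, Relation.ReflTransGen r y v → v ≠ x) :
    ∃ v, Relation.ReflTransGen r y v ∧ LegalityEdge L O v x := by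
  classical
  obtain ⟨hcard, hpart, hsub⟩ := hO
  have hxy_ne : x ≠ y := fun h => hyOi (h ▸ hxOi)
  by_contra hcon
  push_neg at hcon
  -- players touching the reachable set
  set T : Finset I := univ.filter (fun j => ∃ z ∈ O j, Relation.ReflTransGen r y z) with hT
  set S : Finset X := T.biUnion O with hS
  -- disjointness of bundles in any legal allocation
  have hdisj : ∀ (O' : I → Finset X), (∀ w : X, ∃! j, w ∈ O' j) →
      (T : Set I).PairwiseDisjoint O' := by
    intro O' hp' j _ j' _ hjj'
    refine Finset.disjoint_left.mpr fun w hw hw' => hjj' ?_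
    obtain ⟨j'', _, hu⟩ := hp' w
    exact (hu j hw).trans (hu j' hw').symm
  -- L j ⊆ S for j ∈ T
  have hLT : ∀ j ∈ T, L j ⊆ S := by
    intro j hj w hw
    obtain ⟨z, hzO, hzR⟩ := (mem_filter.mp hj).2
    by_cases hwO : w ∈ O j
    · exact mem_biUnion.mpr ⟨j, hj, hwO⟩
    · have hE : LegalityEdge L O z w := ⟨j, hzO, hw, hwO⟩
      have hwx : w ≠ x := by rintro rfl; exact hcon z hzR hE
      have hwR : Relation.ReflTransGen r y w :=
        hzR.tail (by rw [hr]; exact ⟨hE, hRne z hzR, hwx⟩)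
      obtain ⟨j', hj', _⟩ := hpart w
      exact mem_biUnion.mpr ⟨j', mem_filter.mpr ⟨mem_univ _, w, hj', hwR⟩, hj'⟩
  have hScard : S.card = ∑ j ∈ T, k j := by
    rw [hS, Finset.card_biUnion]
    · exact sum_congr rfl fun j _ => hcard j
    · intro j hj j' hj' hjj'
      exact hdisj O hpart hj hj' hjj'
  -- any legal allocation fills S exactly with players in T
  have hfill : ∀ (O' : I → Finset X), LegalAlloc k L O' → ∀ w ∈ S, ∃ j ∈ T, w ∈ O' j := by
    intro O' hO' w hw
    obtain ⟨hc', hp', hs'⟩ := hO'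
    have hsub' : T.biUnion O' ⊆ S := by
      intro u hu
      obtain ⟨j, hj, hu'⟩ := mem_biUnion.mp hu
      exact hLT j hj (hs' j hu')
    have hcard' : S.card ≤ (T.biUnion O').card := by
      rw [Finset.card_biUnion (fun j hj j' hj' hjj' => hdisj O' hp' hj hj' hjj'), hScard]
      exact le_of_eq (sum_congr rfl fun j _ => (hc' j).symm)
    have heq : T.biUnion O' = S := Finset.eq_of_subset_of_card_le hsub' hcard'
    rw [← heq] at hw
    exact mem_biUnion.mp hw
  -- i ∈ T
  have hiT : i ∈ T := by
    obtain ⟨O', hO', hyO'⟩ := htight i y hyLi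
    obtain ⟨j1, hj1, _⟩ := hpart y
    have hyS : y ∈ S :=
      mem_biUnion.mpr ⟨j1, mem_filter.mpr ⟨mem_univ _, y, hj1, Relation.ReflTransGen.refl⟩, hj1⟩
    obtain ⟨j, hjT, hyO'j⟩ := hfill O' hO' y hyS
    obtain ⟨j'', _, hu⟩ := hO'.2.1 y
    have : i = j := (hu i hyO').trans (hu j hyO'j).symm
    rwa [this]
  -- a second player m ≠ i with x ∈ L m
  obtain ⟨m, hmmem, hmi⟩ := Finset.exists_mem_ne (lt_of_lt_of_le one_lt_two (h2 x)) i
  have hxLm : x ∈ L m := (mem_filter.mp hmmem).2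
  have hxS : x ∈ S := mem_biUnion.mpr ⟨i, hiT, hxOi⟩
  obtain ⟨O'', hO'', hxO''⟩ := htight m x hxLm
  obtain ⟨j, hjT, hxj⟩ := hfill O'' hO'' x hxS
  have hmT : m ∈ T := by
    obtain ⟨j'', _, hu⟩ := hO''.2.1 x
    have : m = j := (hu m hxO'').trans (hu j hxj).symm
    rwa [this]
  obtain ⟨v, hvO, hvR⟩ := (mem_filter.mp hmT).2
  have hxOm : x ∉ O m := by
    intro hx
    obtain ⟨j'', _, hu⟩ := hpart x
    exact hmi ((hu m hx).trans (hu i hxOi).symm)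
  exact hcon v hvR ⟨m, hvO, hxLm, hxOm⟩


private lemma every_edge_assemble {X I : Type*} [DecidableEq X]
    (L : I → Finset X) (O : I → Finset X) (x y v : X)
    (r : X → X → Prop)
    (hr : r = fun a b => LegalityEdge L O a b ∧ a ≠ x ∧ b ≠ x)
    (hxy : LegalityEdge L O x y)
    (hxy_ne : x ≠ y)
    (hvx : LegalityEdge L O v x)
    (l : List X) (hchain : l.Chain' r) (hhead : l.head? = some y)
    (hlast : l.getLast? = some v) (hnodup : l.Nodup)
    (hmem : ∀ c ∈ l, c = y ∨ ∃ d, r d c) :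
    ∃ (n : ℕ) (z : Fin (n + 1) → X),
      Function.Injective z ∧ z 0 = x ∧ z 1 = y ∧
      ∀ j, LegalityEdge L O (z j) (z (j + 1)) := by
  have hlne : l ≠ [] := by rintro rfl; simp at hhead
  have hxl : x ∉ l := by
    intro hx
    rcases hmem x hx with h | ⟨d, hd⟩
    · exact hxy_ne h
    · rw [hr] at hd; exact hd.2.2 rfl
  obtain ⟨n, hln⟩ : ∃ n, l.length = n + 1 :=
    ⟨l.length - 1, by have := List.length_pos_iff.mpr hlne; omega⟩
  have hlen : (x :: l).length = n + 1 + 1 := by simp [hln]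
  refine ⟨n + 1, fun j => (x :: l).get (Fin.cast hlen.symm j), ?_, ?_, ?_, ?_⟩
  · have hnd : (x :: l).Nodup := List.nodup_cons.mpr ⟨hxl, hnodup⟩
    exact fun j j' h =>
      (Fin.cast_injective _) (List.nodup_iff_injective_get.mp hnd h)
  · rfl
  · have h1 : ((1 : Fin (n + 1 + 1)) : ℕ) = 1 := Fin.val_one _
    show (x :: l).get (Fin.cast hlen.symm 1) = y
    have : (Fin.cast hlen.symm (1 : Fin (n + 1 + 1))) =
        ⟨1, by simp [hln]⟩ := by
      ext; rw [Fin.coe_cast]; exact h1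
    rw [this]
    cases l with
    | nil => exact absurd rfl hlne
    | cons a0 t =>
      show a0 = y
      simpa using hhead
  · have hchainE : (x :: l).Chain' (LegalityEdge L O) := by
      cases l with
      | nil => exact absurd rfl hlne
      | cons a0 t =>
        obtain rfl : a0 = y := by simpa using hhead
        exact List.isChain_cons_cons.mpr ⟨hxy, hchain.imp (fun a b h => by rw [hr] at h; exact h.1)⟩
    intro j
    by_cases hj : j = Fin.last _
    · subst hj
      have h0 : (Fin.last (n + 1) + 1) = 0 := by
        rw [Fin.last_add_one]
      rw [h0]
      show LegalityEdge L O ((x :: l).get _) ((x :: l).get _)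
      have hgv : (x :: l).get (Fin.cast hlen.symm (Fin.last _)) = v := by
        have hlv : (x :: l).getLast (by simp) = v := by
          rw [List.getLast_cons hlne]
          have := List.getLast?_eq_getLast hlne
          rw [this] at hlast
          exact Option.some_inj.mp hlast
        rw [List.getLast_eq_getElem] at hlv
        convert hlv using 2
        simp [Fin.last, hln]
      have hg0 : (x :: l).get (Fin.cast hlen.symm 0) = x := rfl
      rw [hgv, hg0]
      exact hvx
    · have hjv : ((j + 1 : Fin _) : ℕ) = (j : ℕ) + 1 := by
        rw [Fin.val_add_one, if_neg hj]
      show LegalityEdge L O ((x :: l).get _) ((x :: l).get _)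
      have hjne : (j : ℕ) ≠ n + 1 := fun h => hj (Fin.ext h)
      have hjlt := j.isLt
      have hbd : (j : ℕ) < (x :: l).length - 1 := by
        simp only [List.length_cons, hln]
        omega
      have this2 := List.isChain_iff_getElem.mp hchainE (j : ℕ) (by omega)
      have e2 : Fin.cast hlen.symm (j + 1) =
          (⟨(j : ℕ) + 1, by simp only [List.length_cons, hln]; omega⟩ : Fin (x :: l).length) := by
        ext
        rw [Fin.coe_cast]
        exact hjv
      rw [e2]
      exact this2

/-- In a simplified market in which every item is legal to at least two players, every
edge of the legality graph of a legal allocation lies on a directed cycle. -/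
theorem every_edge_in_cycle
    {X I : Type*} [Fintype X] [DecidableEq X] [Fintype I] [DecidableEq I]
    (k : I → ℕ) (hk : ∀ i, 1 ≤ k i) (hsum : ∑ i, k i = Fintype.card X)
    (hI : 2 ≤ Fintype.card I)
    (L : I → Finset X)
    (htight : ∀ i, ∀ x ∈ L i, ∃ O : I → Finset X, LegalAlloc k L O ∧ x ∈ O i)
    (h2 : ∀ x : X, 2 ≤ (Finset.univ.filter (fun i => x ∈ L i)).card)
    (O : I → Finset X) (hO : LegalAlloc k L O)
    (x y : X) (hxy : LegalityEdge L O x y) :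
    ∃ (l : ℕ) (z : Fin (l + 1) → X),
      Function.Injective z ∧ z 0 = x ∧ z 1 = y ∧
      ∀ j, LegalityEdge L O (z j) (z (j + 1)) := by
  classical
  obtain ⟨i, hxOi, hyLi, hyOi⟩ := hxy
  have hxy_ne : x ≠ y := fun h => hyOi (h ▸ hxOi)
  set r : X → X → Prop := fun a b => LegalityEdge L O a b ∧ a ≠ x ∧ b ≠ x with hr
  have hRne : ∀ v, Relation.ReflTransGen r y v → v ≠ x := by
    intro v hv
    induction hv with
    | refl => exact fun h => hxy_ne h.symm
    | tail _ h ih => exact h.2.2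
  obtain ⟨v, hvR, hvx⟩ :=
    every_edge_key k L htight h2 O hO x y i hxOi hyLi hyOi r hr hRne
  obtain ⟨lst, hchain, hhead, hlast, hnodup, hmem⟩ := exists_nodup_chain r hvR
  exact every_edge_assemble L O x y v r hr ⟨i, hxOi, hyLi, hyOi⟩ hxy_ne hvx
    lst hchain hhead hlast hnodup hmem
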